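/- Assume x₀ has full orbit under G, G acts nontrivially on x₀, and consider a short subgroup sequence {1} = G₀ < G₁ < G₂ = G with coset leader sets CL₁ = G₁ and CL₂ = CL(G/G₁). Then there exists δ > 0 such that for every g ∈ G and every r with ‖r − g⁻¹x₀‖ < δ every greedy run on r has output equal to g, if and only if every coset leader in CL(G/G₁) is minimal. -/

import Mathlib

open Set
open scoped Pointwise

noncomputable section

namespace GroupCode

variable {V : Type*} [NormedAddCommGroup V] [InnerProductSpace ℂ V]

/-- The group of linear isometries of a complex inner product space. -/
abbrev Iso (V : Type*) [NormedAddCommGroup V] [InnerProductSpace ℂ V] := V ≃ₗᵢ[ℂ] V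

/-- The stabilizer (isotropy) of `x₀` inside a subgroup `H`. -/
def Stab (x₀ : V) (H : Subgroup (Iso V)) : Set (Iso V) := {h | h ∈ H ∧ h x₀ = x₀}

/-- The fundamental region of a subgroup `H`. -/
def FR (x₀ : V) (H : Subgroup (Iso V)) : Set V :=
  {x | ∀ h ∈ H, h ∉ Stab x₀ H → ‖x - x₀‖ < ‖h x - x₀‖}

/-- The decoding region of a group element `g ∈ G`. -/
def DR (x₀ : V) (G : Subgroup (Iso V)) (g : Iso V) : Set V :=
  {x | ∀ a ∈ G, a ∉ Stab x₀ G * ({g} : Set (Iso V)) → ‖g x - x₀‖ < ‖a x - x₀‖}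

/-- `CL` is a set of coset leaders for `K` over `H`: a subset of `K` containing `1` and
exactly one element of each left coset of `H` in `K`. -/
def IsCosetLeaders (H K : Subgroup (Iso V)) (CL : Set (Iso V)) : Prop :=
  CL ⊆ (K : Set (Iso V)) ∧ (1 : Iso V) ∈ CL ∧ ∀ a ∈ K, ∃! c, c ∈ CL ∧ c⁻¹ * a ∈ H

/-- Greed compatibility of a set of coset leaders for `K` over `H`. -/
def GreedCompatible (x₀ : V) (H K : Subgroup (Iso V)) (CL : Set (Iso V)) : Prop :=
  ∀ x ∈ FR x₀ H, ∃ c ∈ CL, c x ∈ FR x₀ K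

/-- A coset leader `c` of `K` over `H` is minimal if `x₀ ∈ c(FR(H))`. -/
def Minimal (x₀ : V) (H : Subgroup (Iso V)) (c : Iso V) : Prop :=
  x₀ ∈ ⇑c '' FR x₀ H

/-- A coset leader `c` of `K` over `H` is region minimal if `FR(K) ⊆ c(FR(H))`. -/
def RegionMinimal (x₀ : V) (H K : Subgroup (Iso V)) (c : Iso V) : Prop :=
  FR x₀ K ⊆ ⇑c '' FR x₀ H

/-- The product `d_k ⋯ d_1`. -/
def pprod {α : Type*} [Monoid α] (d : ℕ → α) (k : ℕ) : α :=
  (List.range k).foldl (fun acc j => d (j + 1) * acc) 1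

/-- The product `cs_ℓ ⋯ cs_{k+1}` of induced coset leaders. -/
def pprodRange {α : Type*} [Monoid α] (cs : ℕ → α) (k ℓ : ℕ) : α :=
  (List.range (ℓ - k)).foldl (fun acc j => cs (k + 1 + j) * acc) 1

/-- A greedy run of the subgroup decoding algorithm on a received vector `r`:
at each step `k`, `d k ∈ CL k` minimizes the distance of `d (d_{k-1} ⋯ d_1 r)` to `x₀`
over all `d ∈ CL k`. -/
def IsGreedyRun (x₀ : V) (CL : ℕ → Set (Iso V)) (m : ℕ) (r : V) (d : ℕ → Iso V) : Prop :=
  ∀ k < m, d (k + 1) ∈ CL (k + 1) ∧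
    ∀ e ∈ CL (k + 1), ‖(d (k + 1)) ((pprod d k) r) - x₀‖ ≤ ‖e ((pprod d k) r) - x₀‖

end GroupCode

private lemma exists_pos_lb (S : Set ℝ) (hS : S.Finite) (hpos : ∀ x ∈ S, 0 < x) :
    ∃ δ > 0, ∀ x ∈ S, δ ≤ x := by
  rcases S.eq_empty_or_nonempty with h | h
  · exact ⟨1, one_pos, by simp [h]⟩
  · exact ⟨sInf S, hpos _ (h.csInf_mem hS), fun x hx => csInf_le hS.bddBelow hx⟩

open GroupCode in
/-- **Theorem (Statement 5).** For a short subgroup sequence `{1} < G₁ < G` with coset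
leaders `CL₁ = G₁` and `CL₂ = CL(G/G₁)`, the subgroup decoding algorithm decodes
correctly with some noise if and only if the coset leaders in `CL(G/G₁)` are minimal. -/
theorem short_sequence_correct_iff_minimal
    {V : Type*} [NormedAddCommGroup V] [InnerProductSpace ℂ V] [FiniteDimensional ℂ V]
    (G : Subgroup (Iso V)) (hGfin : (G : Set (Iso V)).Finite)
    (x₀ : V) (hx₀ : ‖x₀‖ = 1)
    (hfull : Stab x₀ G = ({1} : Set (Iso V)))
    (hnontriv : ∃ g ∈ G, g x₀ ≠ x₀)
    (G₁ : Subgroup (Iso V)) (hbot : ⊥ < G₁) (hG₁G : G₁ < G)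
    (CL₂ : Set (Iso V)) (hCL₂ : IsCosetLeaders G₁ G CL₂) :
    (∃ δ > (0 : ℝ), ∀ g ∈ G, ∀ r : V, ‖r - g⁻¹ x₀‖ < δ →
        ∀ d₁ d₂ : Iso V,
          d₁ ∈ G₁ → (∀ e ∈ G₁, ‖d₁ r - x₀‖ ≤ ‖e r - x₀‖) →
          d₂ ∈ CL₂ → (∀ e ∈ CL₂, ‖d₂ (d₁ r) - x₀‖ ≤ ‖e (d₁ r) - x₀‖) →
          d₂ * d₁ = g) ↔
      ∀ c ∈ CL₂, Minimal x₀ G₁ c := by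
  have norm_sub_map : ∀ (f : Iso V) (x y : V), ‖f x - f y‖ = ‖x - y‖ := by
    intro f x y; rw [← map_sub]; exact f.norm_map _
  have hstab1 : ∀ k : Iso V, k ∈ G → k x₀ = x₀ → k = 1 := by
    intro k hk hkx
    have : k ∈ Stab x₀ G := ⟨hk, hkx⟩
    rw [hfull] at this; simpa using this
  have hG₁fin : ((G₁ : Set (Iso V))).Finite := hGfin.subset (fun x hx => hG₁G.le hx)
  have hCLfin : CL₂.Finite := hGfin.subset hCL₂.1
  constructor
  · rintro ⟨δ, hδ, hcorr⟩ c hc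
    have hcG : c ∈ G := hCL₂.1 hc
    refine ⟨c⁻¹ x₀, ?_, c.apply_symm_apply x₀⟩
    intro h hh hhstab
    by_contra hle
    push_neg at hle
    have hne1 : h ≠ 1 := by
      rintro rfl; exact hhstab ⟨hh, rfl⟩
    -- pick a minimizer over G₁ \ {1}
    obtain ⟨e₀, he₀mem, he₀min⟩ := Set.exists_min_image ((G₁ : Set (Iso V)) \ {1})
      (fun e => ‖e (c⁻¹ x₀) - x₀‖) hG₁fin.diff ⟨h, hh, hne1⟩
    obtain ⟨he₀G₁, he₀ne⟩ := he₀mem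
    have he₀min' : ∀ e ∈ G₁, ‖e₀ (c⁻¹ x₀) - x₀‖ ≤ ‖e (c⁻¹ x₀) - x₀‖ := by
      intro e he
      rcases eq_or_ne e 1 with rfl | hene
      · calc ‖e₀ (c⁻¹ x₀) - x₀‖ ≤ ‖h (c⁻¹ x₀) - x₀‖ := he₀min h ⟨hh, hne1⟩
          _ ≤ ‖(1 : Iso V) (c⁻¹ x₀) - x₀‖ := hle
      · exact he₀min e ⟨he, hene⟩
    -- pick a minimizer over CL₂
    obtain ⟨d₂, hd₂mem, hd₂min⟩ := Set.exists_min_image CL₂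
      (fun e => ‖e (e₀ (c⁻¹ x₀)) - x₀‖) hCLfin ⟨1, hCL₂.2.1⟩
    have hrnorm : ‖c⁻¹ x₀ - c⁻¹ x₀‖ < δ := by simpa using hδ
    have hout : d₂ * e₀ = c :=
      hcorr c hcG (c⁻¹ x₀) hrnorm e₀ d₂ he₀G₁ he₀min' hd₂mem hd₂min
    -- uniqueness of coset leaders forces d₂ = c, so e₀ = 1, contradiction
    obtain ⟨c', hc'prop, huniq⟩ := hCL₂.2.2 d₂ (hCL₂.1 hd₂mem)
    have h1 : d₂ = c' := huniq d₂ ⟨hd₂mem, by simpa using one_mem G₁⟩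
    have h2 : c = c' := by
      refine huniq c ⟨hc, ?_⟩
      have : d₂ = c * e₀⁻¹ := by rw [← hout]; group
      rw [this]
      simpa using inv_mem he₀G₁
    have : e₀ = 1 := by
      have : d₂ * e₀ = d₂ * 1 := by rw [hout, h1, ← h2, mul_one]
      exact mul_left_cancel this
    exact he₀ne this
  · intro hmin
    -- two finite sets of positive gaps
    set S₁ : Set ℝ := (fun p : Iso V × Iso V => ‖p.2 (p.1⁻¹ x₀) - x₀‖ - ‖p.1⁻¹ x₀ - x₀‖) ''
      (CL₂ ×ˢ ((G₁ : Set (Iso V)) \ {1})) with hS₁def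
    set S₂ : Set ℝ := (fun p : Iso V × Iso V => ‖p.2 (p.1⁻¹ x₀) - x₀‖) ''
      {p ∈ CL₂ ×ˢ CL₂ | p.2 ≠ p.1} with hS₂def
    have hS₁fin : S₁.Finite := ((hCLfin.prod hG₁fin.diff).image _)
    have hS₂fin : S₂.Finite := (((hCLfin.prod hCLfin).subset (sep_subset _ _)).image _)
    have hS₁pos : ∀ x ∈ S₁, 0 < x := by
      rintro x ⟨⟨c, k⟩, ⟨hc, hkG₁, hkne⟩, rfl⟩
      simp only [Set.mem_singleton_iff] at hkne
      obtain ⟨y, hy, hcy⟩ := hmin c hc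
      have hyx : y = c⁻¹ x₀ := by rw [← hcy]; exact (c.symm_apply_apply y).symm
      have hkstab : k ∉ Stab x₀ G₁ := by
        rintro ⟨_, hkx⟩
        exact hkne (hstab1 k (hG₁G.le hkG₁) hkx)
      have := hy k hkG₁ hkstab
      rw [hyx] at this
      simpa using sub_pos.mpr this
    have hS₂pos : ∀ x ∈ S₂, 0 < x := by
      rintro x ⟨⟨c, e⟩, ⟨⟨hc, he⟩, hne⟩, rfl⟩
      simp only [ne_eq] at hne
      have hek : (e * c⁻¹ : Iso V) ∈ G := mul_mem (hCL₂.1 he) (inv_mem (hCL₂.1 hc))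
      have : e (c⁻¹ x₀) ≠ x₀ := by
        intro hcon
        have : (e * c⁻¹ : Iso V) x₀ = x₀ := hcon
        have := hstab1 _ hek this
        exact hne (by rwa [mul_inv_eq_one] at this)
      simpa [sub_ne_zero] using this
    obtain ⟨δ₁, hδ₁pos, hδ₁lb⟩ := exists_pos_lb S₁ hS₁fin hS₁pos
    obtain ⟨δ₂, hδ₂pos, hδ₂lb⟩ := exists_pos_lb S₂ hS₂fin hS₂pos
    refine ⟨min δ₁ δ₂ / 3, by positivity, ?_⟩
    set δ := min δ₁ δ₂ / 3 with hδdef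
    have hδpos : 0 < δ := by positivity
    have hδδ₁ : 3 * δ ≤ δ₁ := by
      have := min_le_left δ₁ δ₂; rw [hδdef]; linarith
    have hδδ₂ : 3 * δ ≤ δ₂ := by
      have := min_le_right δ₁ δ₂; rw [hδdef]; linarith
    intro g hg r hr d₁ d₂ hd₁ hmin₁ hd₂ hmin₂
    obtain ⟨c, ⟨hc, hcg⟩, _⟩ := hCL₂.2.2 g hg
    set h : Iso V := c⁻¹ * g with hhdef
    have hch : c * h = g := by rw [hhdef]; group
    have hginv : g⁻¹ x₀ = h⁻¹ (c⁻¹ x₀) := by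
      have : g⁻¹ = h⁻¹ * c⁻¹ := by rw [← hch, mul_inv_rev]
      rw [this]; rfl
    have hhg : h (g⁻¹ x₀) = c⁻¹ x₀ := by
      rw [hginv]; exact h.apply_symm_apply _
    -- Step 1: d₁ = h
    have hd1h : d₁ = h := by
      by_contra hne
      have hk : (d₁ * h⁻¹ : Iso V) ∈ G₁ := mul_mem hd₁ (inv_mem hcg)
      have hk1 : (d₁ * h⁻¹ : Iso V) ≠ 1 := fun e => hne (by rwa [mul_inv_eq_one] at e)
      have hmem : (‖(d₁ * h⁻¹ : Iso V) (c⁻¹ x₀) - x₀‖ - ‖c⁻¹ x₀ - x₀‖) ∈ S₁ :=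
        ⟨(c, d₁ * h⁻¹), ⟨hc, hk, hk1⟩, rfl⟩
      have hgap := hδ₁lb _ hmem
      have e1 : d₁ (g⁻¹ x₀) = (d₁ * h⁻¹ : Iso V) (c⁻¹ x₀) := by rw [hginv]; rfl
      have hclose : ‖d₁ r - d₁ (g⁻¹ x₀)‖ < δ := by rw [norm_sub_map]; exact hr
      have htri : ‖d₁ (g⁻¹ x₀) - x₀‖ ≤ ‖d₁ r - x₀‖ + ‖d₁ r - d₁ (g⁻¹ x₀)‖ := by
        have := norm_sub_le (d₁ r - x₀) (d₁ r - d₁ (g⁻¹ x₀))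
        simpa [sub_sub_sub_cancel_left] using this
      have hlow : ‖c⁻¹ x₀ - x₀‖ + δ₁ - δ ≤ ‖d₁ r - x₀‖ := by
        rw [e1] at htri hclose; linarith
      have hup : ‖d₁ r - x₀‖ ≤ ‖c⁻¹ x₀ - x₀‖ + δ := by
        have h1 := hmin₁ h hcg
        have h2 : ‖h r - x₀‖ ≤ ‖h r - h (g⁻¹ x₀)‖ + ‖h (g⁻¹ x₀) - x₀‖ := by
          have := norm_add_le (h r - h (g⁻¹ x₀)) (h (g⁻¹ x₀) - x₀)
          have e : h r - h (g⁻¹ x₀) + (h (g⁻¹ x₀) - x₀) = h r - x₀ := by abel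
          rw [e] at this
          linarith [this]
        have h3 : ‖h r - h (g⁻¹ x₀)‖ < δ := by rw [norm_sub_map]; exact hr
        rw [hhg] at h2 h3
        linarith
      linarith
    -- Step 2: d₂ = c
    have hdrc : ‖d₁ r - c⁻¹ x₀‖ < δ := by
      rw [hd1h, ← hhg, norm_sub_map]; exact hr
    have hd2c : d₂ = c := by
      by_contra hne
      have hmem : ‖d₂ (c⁻¹ x₀) - x₀‖ ∈ S₂ := ⟨(c, d₂), ⟨⟨hc, hd₂⟩, hne⟩, rfl⟩
      have hgap := hδ₂lb _ hmem
      have hup : ‖d₂ (d₁ r) - x₀‖ < δ := by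
        have h1 := hmin₂ c hc
        have h2 : ‖c (d₁ r) - x₀‖ = ‖d₁ r - c⁻¹ x₀‖ := by
          conv_lhs => rw [show x₀ = c (c⁻¹ x₀) from (c.apply_symm_apply x₀).symm]
          rw [norm_sub_map]
        rw [h2] at h1
        exact lt_of_le_of_lt h1 hdrc
      have hclose : ‖d₂ (d₁ r) - d₂ (c⁻¹ x₀)‖ < δ := by rw [norm_sub_map]; exact hdrc
      have htri : ‖d₂ (c⁻¹ x₀) - x₀‖ ≤ ‖d₂ (d₁ r) - x₀‖ + ‖d₂ (d₁ r) - d₂ (c⁻¹ x₀)‖ := by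
        have := norm_sub_le (d₂ (d₁ r) - x₀) (d₂ (d₁ r) - d₂ (c⁻¹ x₀))
        simpa [sub_sub_sub_cancel_left] using this
      linarith
    rw [hd1h, hd2c, hch]
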